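/- Counting bound for binned codebook leakage: suppose W^n is a function of (M_0, L_0) where, given M_0, L_0 takes at most 2^{nR̃_0} values, and U^n is a function of (M_0, L_0, M_1, L_{1s}, L_{12}) where given (M_0, M_1, W^n), the pair (L_{1s}, L_{12}) takes at most 2^{n(R̃_{1s}+R̃_{12})} values, and given (M_0, M_1, W^n, S^n), U^n is uniform over 2^{nR̃_{12}} values. If (M_0,M_1) ⫫ S^n, then I(S^n; W^n, U^n) ≤ n(R̃_0 + R̃_{1s}). -/

import Mathlib

open scoped BigOperators
open Real

namespace Masking

/-- A probability mass function on a finite sample space. -/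
structure FinProb (Ω : Type) [Fintype Ω ] where
  p : Ω → ℝ
  nonneg : ∀ ω, 0 ≤ p ω
  sum_eq_one : ∑ ω, p ω = 1

variable {Ω : Type} [Fintype Ω]

/-- Distribution (pmf) of a random variable `X`. -/
def pdist (μ : FinProb Ω) {α : Type} [DecidableEq α] (X : Ω → α) (a : α) : ℝ :=
  ∑ ω, if X ω = a then μ.p ω else 0

/-- Shannon entropy (in nats). -/
noncomputable def ent (μ : FinProb Ω) {α : Type} [Fintype α] [DecidableEq α] (X : Ω → α) : ℝ :=
  -∑ a, pdist μ X a * Real.log (pdist μ X a)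

/-- Conditional entropy `H(X|Y)`. -/
noncomputable def condEnt (μ : FinProb Ω) {α β : Type} [Fintype α] [DecidableEq α] [Fintype β]
    [DecidableEq β] (X : Ω → α) (Y : Ω → β) : ℝ :=
  ent μ (fun ω => (X ω, Y ω)) - ent μ Y

/-- Mutual information `I(X;Y)`. -/
noncomputable def mutInf (μ : FinProb Ω) {α β : Type} [Fintype α] [DecidableEq α] [Fintype β]
    [DecidableEq β] (X : Ω → α) (Y : Ω → β) : ℝ :=
  ent μ X + ent μ Y - ent μ (fun ω => (X ω, Y ω))

/-- Conditional mutual information `I(X;Y|Z)`. -/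
noncomputable def condMutInf (μ : FinProb Ω) {α β γ : Type} [Fintype α] [DecidableEq α] [Fintype β]
    [DecidableEq β] [Fintype γ] [DecidableEq γ]
    (X : Ω → α) (Y : Ω → β) (Z : Ω → γ) : ℝ :=
  condEnt μ X Z + condEnt μ Y Z - condEnt μ (fun ω => (X ω, Y ω)) Z

/-- Independence of two random variables. -/
def IndepRV (μ : FinProb Ω) {α β : Type} [DecidableEq α] [DecidableEq β]
    (X : Ω → α) (Y : Ω → β) : Prop :=
  ∀ a b, pdist μ (fun ω => (X ω, Y ω)) (a, b) = pdist μ X a * pdist μ Y b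

/-- Mutual independence of a finite family of random variables. -/
def iIndepFam (μ : FinProb Ω) {n : ℕ} {α : Type} [DecidableEq α]
    (X : Fin n → Ω → α) : Prop :=
  ∀ f : Fin n → α, pdist μ (fun ω => fun i => X i ω) f = ∏ i, pdist μ (X i) (f i)

end Masking

namespace Masking

variable {Ω : Type} [Fintype Ω]

/-- Shannon entropy in bits. -/
noncomputable def ent2 (μ : FinProb Ω) {α : Type} [Fintype α] [DecidableEq α] (X : Ω → α) : ℝ :=
  -∑ a, pdist μ X a * Real.logb 2 (pdist μ X a)

/-- Conditional entropy `H(X|Y)` in bits. -/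
noncomputable def condEnt2 (μ : FinProb Ω) {α β : Type} [Fintype α] [DecidableEq α] [Fintype β]
    [DecidableEq β] (X : Ω → α) (Y : Ω → β) : ℝ :=
  ent2 μ (fun ω => (X ω, Y ω)) - ent2 μ Y

/-- Mutual information `I(X;Y)` in bits. -/
noncomputable def mutInf2 (μ : FinProb Ω) {α β : Type} [Fintype α] [DecidableEq α] [Fintype β]
    [DecidableEq β] (X : Ω → α) (Y : Ω → β) : ℝ :=
  ent2 μ X + ent2 μ Y - ent2 μ (fun ω => (X ω, Y ω))

end Masking
namespace MaskingAux
open Masking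

variable {Ω : Type} [Fintype Ω]

lemma nonempty_of_prob (μ : FinProb Ω) : Nonempty Ω := by
  by_contra h
  rw [not_nonempty_iff] at h
  have := μ.sum_eq_one
  rw [Finset.univ_eq_empty, Finset.sum_empty] at this
  norm_num at this

lemma pdist_nonneg (μ : FinProb Ω) {α : Type} [DecidableEq α] (X : Ω → α) (a : α) :
    0 ≤ pdist μ X a := by
  refine Finset.sum_nonneg fun ω _ => ?_
  split
  · exact μ.nonneg ω
  · exact le_refl 0

lemma sum_pdist (μ : FinProb Ω) {α : Type} [Fintype α] [DecidableEq α] (X : Ω → α) :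
    ∑ a, pdist μ X a = 1 := by
  unfold pdist
  rw [Finset.sum_comm]
  simp [μ.sum_eq_one]

lemma pdist_pair_snd (μ : FinProb Ω) {α β : Type} [Fintype α] [DecidableEq α] [DecidableEq β]
    (X : Ω → α) (Y : Ω → β) (b : β) :
    pdist μ Y b = ∑ a, pdist μ (fun ω => (X ω, Y ω)) (a, b) := by
  unfold pdist
  rw [Finset.sum_comm]
  refine Finset.sum_congr rfl fun ω _ => ?_
  by_cases h : Y ω = b <;> simp [h, Prod.ext_iff]

lemma pdist_triple_ac (μ : FinProb Ω) {α β γ : Type} [DecidableEq α] [Fintype β] [DecidableEq β]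
    [DecidableEq γ] (X : Ω → α) (Y : Ω → β) (Z : Ω → γ) (a : α) (c : γ) :
    pdist μ (fun ω => (X ω, Z ω)) (a, c)
      = ∑ b, pdist μ (fun ω => (X ω, Y ω, Z ω)) (a, b, c) := by
  unfold pdist
  rw [Finset.sum_comm]
  refine Finset.sum_congr rfl fun ω _ => ?_
  beta_reduce
  by_cases h : X ω = a ∧ Z ω = c
  · simp [h.1, h.2, Prod.ext_iff]
  · rw [if_neg (by simp only [Prod.mk.injEq]; tauto)]
    refine (Finset.sum_eq_zero fun b _ => ?_).symm
    rw [if_neg (by simp only [Prod.mk.injEq]; tauto)]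

lemma pdist_triple_bc (μ : FinProb Ω) {α β γ : Type} [Fintype α] [DecidableEq α] [DecidableEq β]
    [DecidableEq γ] (X : Ω → α) (Y : Ω → β) (Z : Ω → γ) (b : β) (c : γ) :
    pdist μ (fun ω => (Y ω, Z ω)) (b, c)
      = ∑ a, pdist μ (fun ω => (X ω, Y ω, Z ω)) (a, b, c) := by
  unfold pdist
  rw [Finset.sum_comm]
  refine Finset.sum_congr rfl fun ω _ => ?_
  beta_reduce
  by_cases h : Y ω = b ∧ Z ω = c
  · simp [h.1, h.2, Prod.ext_iff]
  · rw [if_neg (by simp only [Prod.mk.injEq]; tauto)]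
    refine (Finset.sum_eq_zero fun a _ => ?_).symm
    rw [if_neg (by simp only [Prod.mk.injEq]; tauto)]

lemma pdist_triple_c (μ : FinProb Ω) {α β γ : Type} [Fintype α] [DecidableEq α] [Fintype β]
    [DecidableEq β] [DecidableEq γ] (X : Ω → α) (Y : Ω → β) (Z : Ω → γ) (c : γ) :
    pdist μ Z c = ∑ a, ∑ b, pdist μ (fun ω => (X ω, Y ω, Z ω)) (a, b, c) := by
  rw [pdist_pair_snd μ X Z c]
  exact Finset.sum_congr rfl fun a _ => pdist_triple_ac μ X Y Z a c

lemma gibbs_term {p q : ℝ} (hp : 0 ≤ p) (hq : 0 ≤ q) (h : p ≠ 0 → 0 < q) :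
    p - q ≤ p * Real.log p - p * Real.log q := by
  rcases eq_or_lt_of_le hp with h0 | h0
  · rw [← h0]; simp; linarith
  · have hq' : 0 < q := h h0.ne'
    have hl := Real.log_le_sub_one_of_pos (div_pos hq' h0)
    rw [Real.log_div hq'.ne' h0.ne'] at hl
    have h2 := mul_le_mul_of_nonneg_left hl h0.le
    have h3 : p * (q / p) = q := by field_simp
    have e1 : p * (Real.log q - Real.log p) = p * Real.log q - p * Real.log p := by ring
    have e2 : p * (q / p - 1) = p * (q / p) - p := by ring
    rw [e1, e2, h3] at h2
    linarith

lemma mul_log_mono {p q : ℝ} (hp : 0 ≤ p) (hpq : p ≤ q) :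
    p * Real.log p ≤ p * Real.log q := by
  rcases eq_or_lt_of_le hp with h0 | h0
  · rw [← h0]; simp
  · exact mul_le_mul_of_nonneg_left (Real.log_le_log h0 hpq) hp

lemma submod_term {p pac pbc pc : ℝ} (hp : 0 ≤ p) (hpac : 0 ≤ pac) (hpbc : 0 ≤ pbc)
    (h1 : p ≤ pac) (h2 : p ≤ pbc) (h3 : pac ≤ pc) :
    p - (if pc = 0 then 0 else pac * pbc / pc)
      ≤ p * Real.log p + p * Real.log pc - p * Real.log pac - p * Real.log pbc := by
  rcases eq_or_lt_of_le hp with h0 | h0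
  · rw [← h0]
    simp only [zero_mul, add_zero, sub_zero, zero_sub, zero_add, neg_zero, zero_mul]
    split_ifs with h
    · simp
    · have hpc : 0 < pc := lt_of_le_of_ne (le_trans hpac h3) (Ne.symm h)
      have : 0 ≤ pac * pbc / pc := div_nonneg (mul_nonneg hpac hpbc) hpc.le
      linarith
  · have hpac' : 0 < pac := lt_of_lt_of_le h0 h1
    have hpbc' : 0 < pbc := lt_of_lt_of_le h0 h2
    have hpc : 0 < pc := lt_of_lt_of_le hpac' h3
    rw [if_neg hpc.ne']
    have hq : 0 < pac * pbc / pc := div_pos (mul_pos hpac' hpbc') hpc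
    have hgib := gibbs_term h0.le hq.le (fun _ => hq)
    have hlq : Real.log (pac * pbc / pc) = Real.log pac + Real.log pbc - Real.log pc := by
      rw [Real.log_div (mul_pos hpac' hpbc').ne' hpc.ne', Real.log_mul hpac'.ne' hpbc'.ne']
    rw [hlq] at hgib
    have e1 : p * (Real.log pac + Real.log pbc - Real.log pc)
        = p * Real.log pac + p * Real.log pbc - p * Real.log pc := by ring
    rw [e1] at hgib
    linarith

lemma sum_comm3 {α β γ : Type} [Fintype α] [Fintype β] [Fintype γ] (f : α → β → γ → ℝ) :
    ∑ a, ∑ b, ∑ c, f a b c = ∑ c, ∑ a, ∑ b, f a b c := by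
  calc ∑ a, ∑ b, ∑ c, f a b c = ∑ a, ∑ c, ∑ b, f a b c :=
        Finset.sum_congr rfl fun a _ => Finset.sum_comm
    _ = ∑ c, ∑ a, ∑ b, f a b c := Finset.sum_comm

lemma ent_comp_equiv (μ : FinProb Ω) {α β : Type} [Fintype α] [DecidableEq α] [Fintype β]
    [DecidableEq β] (e : α ≃ β) (X : Ω → α) :
    ent μ (fun ω => e (X ω)) = ent μ X := by
  have hp : ∀ b, pdist μ (fun ω => e (X ω)) b = pdist μ X (e.symm b) := by
    intro b
    unfold pdist
    refine Finset.sum_congr rfl fun ω _ => ?_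
    beta_reduce
    simp only [Equiv.apply_eq_iff_eq_symm_apply]
  unfold ent
  simp only [hp]
  rw [Equiv.sum_comp e.symm (fun a => pdist μ X a * Real.log (pdist μ X a))]

lemma pdist_pair_fun (μ : FinProb Ω) {α β : Type} [DecidableEq α] [DecidableEq β]
    (X : Ω → α) (Y : Ω → β) (φ : α → β) (h : ∀ ω, Y ω = φ (X ω)) (b : β) (a : α) :
    pdist μ (fun ω => (Y ω, X ω)) (b, a) = if φ a = b then pdist μ X a else 0 := by
  unfold pdist
  by_cases hb : φ a = b
  · rw [if_pos hb]
    refine Finset.sum_congr rfl fun ω _ => ?_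
    beta_reduce
    congr 1
    rw [eq_iff_iff]
    constructor
    · rintro hEq
      rw [Prod.mk.injEq] at hEq
      exact hEq.2
    · intro h2
      rw [Prod.mk.injEq]
      exact ⟨by rw [h ω, h2, hb], h2⟩
  · rw [if_neg hb]
    refine Finset.sum_eq_zero fun ω _ => ?_
    beta_reduce
    rw [if_neg]
    intro hEq
    rw [Prod.mk.injEq] at hEq
    exact hb (by rw [← hEq.2, ← h ω, hEq.1])

lemma ent_pair_fun (μ : FinProb Ω) {α β : Type} [Fintype α] [DecidableEq α] [Fintype β]
    [DecidableEq β] (X : Ω → α) (Y : Ω → β) (φ : α → β) (h : ∀ ω, Y ω = φ (X ω)) :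
    ent μ (fun ω => (Y ω, X ω)) = ent μ X := by
  unfold ent
  rw [Fintype.sum_prod_type]
  congr 1
  rw [Finset.sum_comm]
  refine Finset.sum_congr rfl fun a _ => ?_
  simp only [pdist_pair_fun μ X Y φ h]
  simp [apply_ite (fun x : ℝ => x * Real.log x)]

lemma ent_pair_ge_snd (μ : FinProb Ω) {α β : Type} [Fintype α] [DecidableEq α] [Fintype β]
    [DecidableEq β] (X : Ω → α) (Y : Ω → β) :
    ent μ Y ≤ ent μ (fun ω => (X ω, Y ω)) := by
  unfold ent
  rw [Fintype.sum_prod_type, neg_le_neg_iff, Finset.sum_comm]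
  refine Finset.sum_le_sum fun b _ => ?_
  rw [pdist_pair_snd μ X Y b, Finset.sum_mul]
  refine Finset.sum_le_sum fun a _ => ?_
  refine mul_log_mono (pdist_nonneg μ _ _) ?_
  exact Finset.single_le_sum (f := fun a' => pdist μ (fun ω => (X ω, Y ω)) (a', b))
    (fun a' _ => pdist_nonneg μ _ _) (Finset.mem_univ a)

lemma mul_log_mul {x y : ℝ} (hx : 0 ≤ x) (hy : 0 ≤ y) :
    x * y * Real.log (x * y) = y * (x * Real.log x) + x * (y * Real.log y) := by
  rcases eq_or_lt_of_le hx with h | h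
  · rw [← h]; simp
  rcases eq_or_lt_of_le hy with h' | h'
  · rw [← h']; simp
  rw [Real.log_mul h.ne' h'.ne']; ring

lemma ent_indep (μ : FinProb Ω) {α β : Type} [Fintype α] [DecidableEq α] [Fintype β]
    [DecidableEq β] (X : Ω → α) (Y : Ω → β) (h : IndepRV μ X Y) :
    ent μ (fun ω => (X ω, Y ω)) = ent μ X + ent μ Y := by
  unfold ent
  rw [Fintype.sum_prod_type]
  have key : ∀ a, ∑ b, pdist μ (fun ω => (X ω, Y ω)) (a, b)
        * Real.log (pdist μ (fun ω => (X ω, Y ω)) (a, b))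
      = ∑ b, (pdist μ Y b * (pdist μ X a * Real.log (pdist μ X a))
          + pdist μ X a * (pdist μ Y b * Real.log (pdist μ Y b))) := by
    intro a
    refine Finset.sum_congr rfl fun b _ => ?_
    rw [h a b]
    exact mul_log_mul (pdist_nonneg μ X a) (pdist_nonneg μ Y b)
  simp only [key, Finset.sum_add_distrib, ← Finset.sum_mul, ← Finset.mul_sum, sum_pdist,
    one_mul]
  ring

lemma sum_gibbs_submod {α β γ : Type} [Fintype α] [Fintype β] [Fintype γ]
    (P : α → β → γ → ℝ) (hP : ∀ a b c, 0 ≤ P a b c) (hS : ∑ a, ∑ b, ∑ c, P a b c = 1) :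
    ∑ a, ∑ b, ∑ c, P a b c * Real.log (∑ b', P a b' c)
      + ∑ a, ∑ b, ∑ c, P a b c * Real.log (∑ a', P a' b c)
    ≤ ∑ a, ∑ b, ∑ c, P a b c * Real.log (P a b c)
      + ∑ a, ∑ b, ∑ c, P a b c * Real.log (∑ a', ∑ b', P a' b' c) := by
  have key : ∀ a b c, P a b c - (if (∑ a', ∑ b', P a' b' c) = 0 then 0 else
        (∑ b', P a b' c) * (∑ a', P a' b c) / (∑ a', ∑ b', P a' b' c))
      ≤ P a b c * Real.log (P a b c) + P a b c * Real.log (∑ a', ∑ b', P a' b' c)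
        - P a b c * Real.log (∑ b', P a b' c) - P a b c * Real.log (∑ a', P a' b c) := by
    intro a b c
    refine submod_term (hP a b c) ?_ ?_ ?_ ?_ ?_
    · exact Finset.sum_nonneg fun b' _ => hP a b' c
    · exact Finset.sum_nonneg fun a' _ => hP a' b c
    · exact Finset.single_le_sum (fun b' _ => hP a b' c) (Finset.mem_univ b)
    · exact Finset.single_le_sum (fun a' _ => hP a' b c) (Finset.mem_univ a)
    · exact Finset.single_le_sum (f := fun a' => ∑ b', P a' b' c)
        (fun a' _ => Finset.sum_nonneg fun b' _ => hP a' b' c) (Finset.mem_univ a)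
  have hQ : ∑ a, ∑ b, ∑ c, (if (∑ a', ∑ b', P a' b' c) = 0 then 0 else
        (∑ b', P a b' c) * (∑ a', P a' b c) / (∑ a', ∑ b', P a' b' c)) = 1 := by
    rw [sum_comm3]
    have hc : ∀ c, ∑ a, ∑ b, (if (∑ a', ∑ b', P a' b' c) = 0 then 0 else
          (∑ b', P a b' c) * (∑ a', P a' b c) / (∑ a', ∑ b', P a' b' c))
        = ∑ a', ∑ b', P a' b' c := by
      intro c
      by_cases h : (∑ a', ∑ b', P a' b' c) = 0
      · simp [h]
      · simp only [if_neg h]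
        have step : ∀ a, ∑ b, (∑ b', P a b' c) * (∑ a', P a' b c) / (∑ a', ∑ b', P a' b' c)
            = (∑ b', P a b' c) * (∑ b, ∑ a', P a' b c) / (∑ a', ∑ b', P a' b' c) := by
          intro a
          rw [← Finset.sum_div, ← Finset.mul_sum]
        simp only [step]
        rw [← Finset.sum_div, ← Finset.sum_mul]
        rw [Finset.sum_comm (f := fun b a' => P a' b c)]
        field_simp
    simp only [hc]
    rw [← sum_comm3]
    exact hS
  have big := Finset.sum_le_sum (fun a (_ : a ∈ Finset.univ) =>
    Finset.sum_le_sum (fun b (_ : b ∈ Finset.univ) =>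
      Finset.sum_le_sum (fun c (_ : c ∈ Finset.univ) => key a b c)))
  simp only [Finset.sum_sub_distrib, Finset.sum_add_distrib] at big
  rw [hS, hQ] at big
  linarith

lemma ent_submod (μ : FinProb Ω) {α β γ : Type} [Fintype α] [DecidableEq α] [Fintype β]
    [DecidableEq β] [Fintype γ] [DecidableEq γ] (X : Ω → α) (Y : Ω → β) (Z : Ω → γ) :
    ent μ (fun ω => (X ω, Y ω, Z ω)) + ent μ Z
      ≤ ent μ (fun ω => (X ω, Z ω)) + ent μ (fun ω => (Y ω, Z ω)) := by
  have hsum : ∑ a, ∑ b, ∑ c, pdist μ (fun ω => (X ω, Y ω, Z ω)) (a, b, c) = 1 := by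
    have := sum_pdist μ (fun ω => (X ω, Y ω, Z ω))
    simp only [Fintype.sum_prod_type] at this
    exact this
  have key := sum_gibbs_submod (fun a b c => pdist μ (fun ω => (X ω, Y ω, Z ω)) (a, b, c))
    (fun a b c => pdist_nonneg μ _ _) hsum
  beta_reduce at key
  have eXYZ : ent μ (fun ω => (X ω, Y ω, Z ω))
      = -∑ a, ∑ b, ∑ c, pdist μ (fun ω => (X ω, Y ω, Z ω)) (a, b, c)
          * Real.log (pdist μ (fun ω => (X ω, Y ω, Z ω)) (a, b, c)) := by
    simp only [ent, Fintype.sum_prod_type]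
  have eXZ : ent μ (fun ω => (X ω, Z ω))
      = -∑ a, ∑ b, ∑ c, pdist μ (fun ω => (X ω, Y ω, Z ω)) (a, b, c)
          * Real.log (∑ b', pdist μ (fun ω => (X ω, Y ω, Z ω)) (a, b', c)) := by
    simp only [ent, Fintype.sum_prod_type, pdist_triple_ac μ X Y Z]
    congr 1
    refine Finset.sum_congr rfl fun a _ => ?_
    rw [Finset.sum_comm]
    exact Finset.sum_congr rfl fun c _ => Finset.sum_mul _ _ _
  have eYZ : ent μ (fun ω => (Y ω, Z ω))
      = -∑ a, ∑ b, ∑ c, pdist μ (fun ω => (X ω, Y ω, Z ω)) (a, b, c)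
          * Real.log (∑ a', pdist μ (fun ω => (X ω, Y ω, Z ω)) (a', b, c)) := by
    simp only [ent, Fintype.sum_prod_type, pdist_triple_bc μ X Y Z]
    congr 1
    calc ∑ b, ∑ c, (∑ a, pdist μ (fun ω => (X ω, Y ω, Z ω)) (a, b, c))
            * Real.log (∑ a', pdist μ (fun ω => (X ω, Y ω, Z ω)) (a', b, c))
        = ∑ b, ∑ c, ∑ a, pdist μ (fun ω => (X ω, Y ω, Z ω)) (a, b, c)
            * Real.log (∑ a', pdist μ (fun ω => (X ω, Y ω, Z ω)) (a', b, c)) := by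
          exact Finset.sum_congr rfl fun b _ => Finset.sum_congr rfl fun c _ =>
            Finset.sum_mul _ _ _
      _ = _ := sum_comm3 _
  have eZ : ent μ Z
      = -∑ a, ∑ b, ∑ c, pdist μ (fun ω => (X ω, Y ω, Z ω)) (a, b, c)
          * Real.log (∑ a', ∑ b', pdist μ (fun ω => (X ω, Y ω, Z ω)) (a', b', c)) := by
    simp only [ent, pdist_triple_c μ X Y Z]
    congr 1
    calc ∑ c, (∑ a, ∑ b, pdist μ (fun ω => (X ω, Y ω, Z ω)) (a, b, c))
            * Real.log (∑ a', ∑ b', pdist μ (fun ω => (X ω, Y ω, Z ω)) (a', b', c))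
        = ∑ c, ∑ a, ∑ b, pdist μ (fun ω => (X ω, Y ω, Z ω)) (a, b, c)
            * Real.log (∑ a', ∑ b', pdist μ (fun ω => (X ω, Y ω, Z ω)) (a', b', c)) := by
          refine Finset.sum_congr rfl fun c _ => ?_
          rw [Finset.sum_mul]
          exact Finset.sum_congr rfl fun a _ => Finset.sum_mul _ _ _
      _ = _ := (sum_comm3 _).symm
  linarith

lemma ent_const (μ : FinProb Ω) : ent μ (fun _ : Ω => (0 : Fin 1)) = 0 := by
  have hp : ∀ a : Fin 1, pdist μ (fun _ : Ω => (0 : Fin 1)) a = 1 := by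
    intro a
    have ha : a = 0 := Subsingleton.elim a 0
    subst ha
    simp [pdist, μ.sum_eq_one]
  simp [ent, hp]

lemma ent_subadd (μ : FinProb Ω) {α β : Type} [Fintype α] [DecidableEq α] [Fintype β]
    [DecidableEq β] (X : Ω → α) (Y : Ω → β) :
    ent μ (fun ω => (X ω, Y ω)) ≤ ent μ X + ent μ Y := by
  have h := ent_submod μ X Y (fun _ : Ω => (0 : Fin 1))
  have e1 : ent μ (fun ω => (X ω, Y ω, (0 : Fin 1))) = ent μ (fun ω => (X ω, Y ω)) :=
    ent_comp_equiv μ ((Equiv.refl α).prodCongr (Equiv.prodUnique β (Fin 1)).symm)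
      (fun ω => (X ω, Y ω))
  have e2 : ent μ (fun ω => (X ω, (0 : Fin 1))) = ent μ X :=
    ent_comp_equiv μ ⟨fun a => (a, (0 : Fin 1)), fun p => p.1, fun a => rfl,
      fun p => Prod.ext rfl (Subsingleton.elim _ _)⟩ X
  have e3 : ent μ (fun ω => (Y ω, (0 : Fin 1))) = ent μ Y :=
    ent_comp_equiv μ ⟨fun a => (a, (0 : Fin 1)), fun p => p.1, fun a => rfl,
      fun p => Prod.ext rfl (Subsingleton.elim _ _)⟩ Y
  have e4 := ent_const μ
  linarith

lemma ent_le_log_card (μ : FinProb Ω) {α : Type} [Fintype α] [DecidableEq α] (X : Ω → α) :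
    ent μ X ≤ Real.log (Fintype.card α) := by
  have hΩ : Nonempty Ω := nonempty_of_prob μ
  have hcard : 0 < Fintype.card α := Fintype.card_pos_iff.mpr ⟨X (Classical.arbitrary Ω)⟩
  have hN : (0 : ℝ) < (Fintype.card α : ℝ) := by exact_mod_cast hcard
  have hNi : (0 : ℝ) < ((Fintype.card α : ℝ))⁻¹ := inv_pos.mpr hN
  have step : ∀ a, pdist μ X a - ((Fintype.card α : ℝ))⁻¹
      ≤ pdist μ X a * Real.log (pdist μ X a)
        - pdist μ X a * Real.log ((Fintype.card α : ℝ))⁻¹ :=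
    fun a => gibbs_term (pdist_nonneg μ X a) hNi.le (fun _ => hNi)
  have hsum := Finset.sum_le_sum (fun a (_ : a ∈ Finset.univ) => step a)
  rw [Finset.sum_sub_distrib, Finset.sum_sub_distrib, sum_pdist, ← Finset.sum_mul,
    sum_pdist, Finset.sum_const, Finset.card_univ, nsmul_eq_mul,
    mul_inv_cancel₀ hN.ne', Real.log_inv] at hsum
  unfold ent
  linarith

lemma ent2_eq (μ : FinProb Ω) {α : Type} [Fintype α] [DecidableEq α] (X : Ω → α) :
    ent2 μ X = ent μ X / Real.log 2 := by
  unfold ent2 ent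
  rw [neg_div, Finset.sum_div]
  congr 1
  refine Finset.sum_congr rfl fun a _ => ?_
  rw [Real.logb, mul_div_assoc]

end MaskingAux

open MaskingAux


open Masking in
/-- counting bound for binned codebook leakage (entropies in bits):
`Wⁿ` is a function of `(M₀,L₀)` where `L₀` ranges over at most `2^{nR̃₀}` values,
`Uⁿ` is a function of `(M₀,L₀,M₁,L_{1s},L_{12})` where given `(M₀,M₁,Wⁿ)` the pair
`(L_{1s},L_{12})` takes at most `2^{n(R̃_{1s}+R̃_{12})}` values (expressed as a
conditional-entropy bound), and given `(M₀,M₁,Wⁿ,Sⁿ)` the codeword `Uⁿ` is uniform over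
`2^{nR̃_{12}}` values (expressed as the exact conditional entropy).  If `(M₀,M₁) ⫫ Sⁿ`
then `I(Sⁿ;Wⁿ,Uⁿ) ≤ n(R̃₀ + R̃_{1s})`. -/
theorem binned_codebook_leakage_bound
    {Ω ℳ₀ ℳ₁ Λ1s Λ12 𝒮 𝒲 𝒰 : Type} [Fintype Ω]
    [Fintype ℳ₀] [DecidableEq ℳ₀] [Fintype ℳ₁] [DecidableEq ℳ₁]
    [Fintype Λ1s] [DecidableEq Λ1s] [Fintype Λ12] [DecidableEq Λ12]
    [Fintype 𝒮] [DecidableEq 𝒮] [Fintype 𝒲] [DecidableEq 𝒲] [Fintype 𝒰] [DecidableEq 𝒰]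
    (μ : FinProb Ω) (n : ℕ) (R0t R1s R12 : ℝ) {K0 : ℕ}
    (M0 : Ω → ℳ₀) (M1 : Ω → ℳ₁) (L0 : Ω → Fin K0) (L1s : Ω → Λ1s) (L12 : Ω → Λ12)
    (S : Ω → 𝒮) (W : Ω → 𝒲) (U : Ω → 𝒰)
    (hK0 : (K0 : ℝ) ≤ (2 : ℝ) ^ ((n : ℝ) * R0t))
    (f : ℳ₀ → Fin K0 → 𝒲) (hW : ∀ ω, W ω = f (M0 ω) (L0 ω))
    (g : ℳ₀ → Fin K0 → ℳ₁ → Λ1s → Λ12 → 𝒰)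
    (hU : ∀ ω, U ω = g (M0 ω) (L0 ω) (M1 ω) (L1s ω) (L12 ω))
    (hbin : condEnt2 μ (fun ω => (L1s ω, L12 ω)) (fun ω => (M0 ω, M1 ω, W ω))
      ≤ (n : ℝ) * (R1s + R12))
    (hunif : condEnt2 μ U (fun ω => (M0 ω, M1 ω, W ω, S ω)) = (n : ℝ) * R12)
    (hind : IndepRV μ (fun ω => (M0 ω, M1 ω)) S) :
    mutInf2 μ S (fun ω => (W ω, U ω)) ≤ (n : ℝ) * (R0t + R1s) := by
  classical
  have hc : (0 : ℝ) < Real.log 2 := Real.log_pos one_lt_two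
  -- hypotheses in nat-log form
  have hbin' : ent μ (fun ω => ((L1s ω, L12 ω), (M0 ω, M1 ω, W ω)))
      - ent μ (fun ω => (M0 ω, M1 ω, W ω)) ≤ ((n : ℝ) * (R1s + R12)) * Real.log 2 := by
    have h := hbin
    simp only [condEnt2, ent2_eq] at h
    rw [← sub_div, div_le_iff₀ hc] at h
    exact h
  have hunif' : ent μ (fun ω => (U ω, (M0 ω, M1 ω, W ω, S ω)))
      - ent μ (fun ω => (M0 ω, M1 ω, W ω, S ω)) = ((n : ℝ) * R12) * Real.log 2 := by
    have h := hunif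
    simp only [condEnt2, ent2_eq] at h
    rw [← sub_div, div_eq_iff hc.ne'] at h
    exact h
  -- f1 : submodularity with X = (M0,M1), Y = S, Z = (W,U)
  have f1 : ent μ (fun ω => ((M0 ω, M1 ω), (S ω, (W ω, U ω)))) + ent μ (fun ω => (W ω, U ω))
      ≤ ent μ (fun ω => ((M0 ω, M1 ω), (W ω, U ω)))
        + ent μ (fun ω => (S ω, (W ω, U ω))) :=
    ent_submod μ (fun ω => (M0 ω, M1 ω)) S (fun ω => (W ω, U ω))
  -- f2 : rearrangement
  have f2 : ent μ (fun ω => (U ω, (W ω, ((M0 ω, M1 ω), S ω))))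
      = ent μ (fun ω => ((M0 ω, M1 ω), (S ω, (W ω, U ω)))) :=
    ent_comp_equiv μ
      (⟨fun p => (p.2.2.2, (p.2.2.1, (p.1, p.2.1))),
        fun q => (q.2.2.1, (q.2.2.2, (q.2.1, q.1))),
        fun p => rfl, fun q => rfl⟩ :
        (ℳ₀ × ℳ₁) × (𝒮 × (𝒲 × 𝒰)) ≃ 𝒰 × (𝒲 × ((ℳ₀ × ℳ₁) × 𝒮)))
      (fun ω => ((M0 ω, M1 ω), (S ω, (W ω, U ω))))
  -- f3 : conditioning on more keeps entropy of pair at least that of second comp.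
  have f3 : ent μ (fun ω => ((M0 ω, M1 ω), S ω))
      ≤ ent μ (fun ω => (W ω, ((M0 ω, M1 ω), S ω))) :=
    ent_pair_ge_snd μ W (fun ω => ((M0 ω, M1 ω), S ω))
  -- f4 : hunif tuples rearranged
  have f4a : ent μ (fun ω => (U ω, (W ω, ((M0 ω, M1 ω), S ω))))
      = ent μ (fun ω => (U ω, (M0 ω, M1 ω, W ω, S ω))) :=
    ent_comp_equiv μ
      (⟨fun p => (p.1, (p.2.2.2.1, ((p.2.1, p.2.2.1), p.2.2.2.2))),
        fun q => (q.1, (q.2.2.1.1, (q.2.2.1.2, (q.2.1, q.2.2.2)))),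
        fun p => rfl, fun q => rfl⟩ :
        𝒰 × (ℳ₀ × (ℳ₁ × (𝒲 × 𝒮))) ≃ 𝒰 × (𝒲 × ((ℳ₀ × ℳ₁) × 𝒮)))
      (fun ω => (U ω, (M0 ω, M1 ω, W ω, S ω)))
  have f4b : ent μ (fun ω => (W ω, ((M0 ω, M1 ω), S ω)))
      = ent μ (fun ω => (M0 ω, M1 ω, W ω, S ω)) :=
    ent_comp_equiv μ
      (⟨fun p => (p.2.2.1, ((p.1, p.2.1), p.2.2.2)),
        fun q => (q.2.1.1, (q.2.1.2, (q.1, q.2.2))),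
        fun p => rfl, fun q => rfl⟩ :
        ℳ₀ × (ℳ₁ × (𝒲 × 𝒮)) ≃ 𝒲 × ((ℳ₀ × ℳ₁) × 𝒮))
      (fun ω => (M0 ω, M1 ω, W ω, S ω))
  -- f5 : independence
  have f5 : ent μ (fun ω => ((M0 ω, M1 ω), S ω))
      = ent μ (fun ω => (M0 ω, M1 ω)) + ent μ S :=
    ent_indep μ (fun ω => (M0 ω, M1 ω)) S hind
  -- f6 : enlarge the pair by the labels
  have f6 : ent μ (fun ω => ((M0 ω, M1 ω), (W ω, U ω)))
      ≤ ent μ (fun ω => ((L0 ω, (L1s ω, L12 ω)), ((M0 ω, M1 ω), (W ω, U ω)))) :=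
    ent_pair_ge_snd μ (fun ω => (L0 ω, (L1s ω, L12 ω)))
      (fun ω => ((M0 ω, M1 ω), (W ω, U ω)))
  -- f7 : (W,U) is a function of the labels and messages
  have f7a : ent μ (fun ω => ((W ω, U ω), ((L0 ω, (L1s ω, L12 ω)), (M0 ω, M1 ω))))
      = ent μ (fun ω => ((L0 ω, (L1s ω, L12 ω)), ((M0 ω, M1 ω), (W ω, U ω)))) :=
    ent_comp_equiv μ
      (⟨fun p => (p.2.2, (p.1, p.2.1)), fun q => (q.2.1, (q.2.2, q.1)),
        fun p => rfl, fun q => rfl⟩ :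
        (Fin K0 × (Λ1s × Λ12)) × ((ℳ₀ × ℳ₁) × (𝒲 × 𝒰))
          ≃ (𝒲 × 𝒰) × ((Fin K0 × (Λ1s × Λ12)) × (ℳ₀ × ℳ₁)))
      (fun ω => ((L0 ω, (L1s ω, L12 ω)), ((M0 ω, M1 ω), (W ω, U ω))))
  have f7b : ent μ (fun ω => ((W ω, U ω), ((L0 ω, (L1s ω, L12 ω)), (M0 ω, M1 ω))))
      = ent μ (fun ω => ((L0 ω, (L1s ω, L12 ω)), (M0 ω, M1 ω))) :=
    ent_pair_fun μ (fun ω => ((L0 ω, (L1s ω, L12 ω)), (M0 ω, M1 ω)))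
      (fun ω => (W ω, U ω))
      (fun p => (f p.2.1 p.1.1, g p.2.1 p.1.1 p.2.2 p.1.2.1 p.1.2.2))
      (fun ω => by simp only [hW ω, hU ω])
  -- f8 : rearrangement of labels
  have f8 : ent μ (fun ω => ((L1s ω, L12 ω), (L0 ω, (M0 ω, M1 ω))))
      = ent μ (fun ω => ((L0 ω, (L1s ω, L12 ω)), (M0 ω, M1 ω))) :=
    ent_comp_equiv μ
      (⟨fun p => (p.1.2, (p.1.1, p.2)), fun q => ((q.2.1, q.1), q.2.2),
        fun p => rfl, fun q => rfl⟩ :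
        (Fin K0 × (Λ1s × Λ12)) × (ℳ₀ × ℳ₁) ≃ (Λ1s × Λ12) × (Fin K0 × (ℳ₀ × ℳ₁)))
      (fun ω => ((L0 ω, (L1s ω, L12 ω)), (M0 ω, M1 ω)))
  -- f9 : submodularity with X = (L1s,L12), Y = L0, Z = (M0,M1,W)
  have f9 : ent μ (fun ω => ((L1s ω, L12 ω), (L0 ω, (M0 ω, M1 ω, W ω))))
      + ent μ (fun ω => (M0 ω, M1 ω, W ω))
      ≤ ent μ (fun ω => ((L1s ω, L12 ω), (M0 ω, M1 ω, W ω)))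
        + ent μ (fun ω => (L0 ω, (M0 ω, M1 ω, W ω))) :=
    ent_submod μ (fun ω => (L1s ω, L12 ω)) L0 (fun ω => (M0 ω, M1 ω, W ω))
  -- f10 : conditioning tuples containing W vs L0 are equivalent
  have f10a : ent μ (fun ω => (W ω, ((L1s ω, L12 ω), (L0 ω, (M0 ω, M1 ω)))))
      = ent μ (fun ω => ((L1s ω, L12 ω), (L0 ω, (M0 ω, M1 ω, W ω)))) :=
    ent_comp_equiv μ
      (⟨fun p => (p.2.2.2.2, (p.1, (p.2.1, (p.2.2.1, p.2.2.2.1)))),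
        fun q => (q.2.1, (q.2.2.1, (q.2.2.2.1, (q.2.2.2.2, q.1)))),
        fun p => rfl, fun q => rfl⟩ :
        (Λ1s × Λ12) × (Fin K0 × (ℳ₀ × (ℳ₁ × 𝒲)))
          ≃ 𝒲 × ((Λ1s × Λ12) × (Fin K0 × (ℳ₀ × ℳ₁))))
      (fun ω => ((L1s ω, L12 ω), (L0 ω, (M0 ω, M1 ω, W ω))))
  have f10b : ent μ (fun ω => (W ω, ((L1s ω, L12 ω), (L0 ω, (M0 ω, M1 ω)))))
      = ent μ (fun ω => ((L1s ω, L12 ω), (L0 ω, (M0 ω, M1 ω)))) :=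
    ent_pair_fun μ (fun ω => ((L1s ω, L12 ω), (L0 ω, (M0 ω, M1 ω)))) W
      (fun p => f p.2.2.1 p.2.1)
      (fun ω => hW ω)
  have f11a : ent μ (fun ω => (W ω, (L0 ω, (M0 ω, M1 ω))))
      = ent μ (fun ω => (L0 ω, (M0 ω, M1 ω, W ω))) :=
    ent_comp_equiv μ
      (⟨fun p => (p.2.2.2, (p.1, (p.2.1, p.2.2.1))),
        fun q => (q.2.1, (q.2.2.1, (q.2.2.2, q.1))),
        fun p => rfl, fun q => rfl⟩ :
        Fin K0 × (ℳ₀ × (ℳ₁ × 𝒲)) ≃ 𝒲 × (Fin K0 × (ℳ₀ × ℳ₁)))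
      (fun ω => (L0 ω, (M0 ω, M1 ω, W ω)))
  have f11b : ent μ (fun ω => (W ω, (L0 ω, (M0 ω, M1 ω))))
      = ent μ (fun ω => (L0 ω, (M0 ω, M1 ω))) :=
    ent_pair_fun μ (fun ω => (L0 ω, (M0 ω, M1 ω))) W
      (fun p => f p.2.1 p.1)
      (fun ω => hW ω)
  -- f13 : subadditivity
  have f13 : ent μ (fun ω => (L0 ω, (M0 ω, M1 ω)))
      ≤ ent μ L0 + ent μ (fun ω => (M0 ω, M1 ω)) :=
    ent_subadd μ L0 (fun ω => (M0 ω, M1 ω))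
  -- f14 : range bound on L0
  have f14 : ent μ L0 ≤ ((n : ℝ) * R0t) * Real.log 2 := by
    have h1 : ent μ L0 ≤ Real.log (Fintype.card (Fin K0)) := ent_le_log_card μ L0
    rw [Fintype.card_fin] at h1
    have hK0pos : (0 : ℝ) < (K0 : ℝ) := by
      have hne : Nonempty Ω := nonempty_of_prob μ
      have := (L0 (Classical.arbitrary Ω)).pos
      exact_mod_cast this
    have h2 : Real.log (K0 : ℝ) ≤ Real.log ((2 : ℝ) ^ ((n : ℝ) * R0t)) :=
      Real.log_le_log hK0pos hK0
    rw [Real.log_rpow (by norm_num : (0:ℝ) < 2)] at h2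
    linarith
  -- assemble
  have hr1 : ((n : ℝ) * (R1s + R12)) * Real.log 2
      = ((n : ℝ) * R1s) * Real.log 2 + ((n : ℝ) * R12) * Real.log 2 := by ring
  have hr2 : ((n : ℝ) * (R0t + R1s)) * Real.log 2
      = ((n : ℝ) * R0t) * Real.log 2 + ((n : ℝ) * R1s) * Real.log 2 := by ring
  simp only [mutInf2, ent2_eq]
  rw [← add_div, ← sub_div, div_le_iff₀ hc]
  linarith
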